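/- Let λ = μ > 0 and ν > 0 be real numbers, let i be a natural number, and let s ∈ (0,1), t > 0. Define G(s,t) = ( (λt + s(1 − λt)) / (1 + λt − λts) )^i · (1 + λt − λts)^{−ν/λ} (the i-th power is an integer power, the real exponent is a real power of the positive base 1 + λt − λts). Then G satisfies ∂G/∂t (s,t) = (μ − λs)(1 − s) ∂G/∂s (s,t) + ν(s − 1) G(s,t) (with μ = λ), and G(s,0) = s^i for all s ∈ (0,1). -/

import Mathlib

open Real

/-- The candidate probability generating function of the linear birth and death
process with immigration in the critical case `λ = μ`, as a function of `s` and `t`. -/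
noncomputable def G (lam nu : ℝ) (i : ℕ) (s t : ℝ) : ℝ :=
  ((lam * t + s * (1 - lam * t)) / (1 + lam * t - lam * t * s)) ^ i *
    (1 + lam * t - lam * t * s) ^ (-(nu / lam))

/-- In the case `λ = μ`, `G` solves the first-order linear PDE
`∂G/∂t = (μ - λ s)(1 - s) ∂G/∂s + ν (s - 1) G` with initial condition `G(s,0) = s^i`. -/
theorem stmt_1 (lam mu nu s t : ℝ) (i : ℕ)
    (hlam : 0 < lam) (hlm : lam = mu) (hnu : 0 < nu)
    (hs : 0 < s) (hs1 : s < 1) (ht : 0 < t) :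
    deriv (fun τ => G lam nu i s τ) t
        = (mu - lam * s) * (1 - s) * deriv (fun σ => G lam nu i σ t) s
          + nu * (s - 1) * G lam nu i s t
      ∧ ∀ σ ∈ Set.Ioo (0 : ℝ) 1, G lam nu i σ 0 = σ ^ i := by
  have hDpos : 0 < 1 + lam * t - lam * t * s := by nlinarith [mul_pos (mul_pos hlam ht) (sub_pos.mpr hs1)]
  have hDne : (1 + lam * t - lam * t * s) ≠ 0 := ne_of_gt hDpos
  have hlamne : lam ≠ 0 := ne_of_gt hlam
  -- derivative in t
  have h1 : HasDerivAt (fun τ : ℝ => lam * τ) lam t := by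
    simpa using (hasDerivAt_id t).const_mul lam
  have hN : HasDerivAt (fun τ => lam * τ + s * (1 - lam * τ)) (lam + s * (0 - lam)) t :=
    h1.add (((hasDerivAt_const t 1).sub h1).const_mul s)
  have hD : HasDerivAt (fun τ => 1 + lam * τ - lam * τ * s) (0 + lam - lam * s) t :=
    ((hasDerivAt_const t 1).add h1).sub (h1.mul_const s)
  have hGt := ((hN.div hD hDne).pow i).mul (hD.rpow_const (p := -(nu/lam)) (Or.inl hDne))
  -- derivative in s
  have hNs : HasDerivAt (fun σ => lam * t + σ * (1 - lam * t)) (0 + 1 * (1 - lam * t)) s :=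
    (hasDerivAt_const s (lam * t)).add ((hasDerivAt_id s).mul_const (1 - lam * t))
  have hDs : HasDerivAt (fun σ => 1 + lam * t - lam * t * σ) (0 - lam * t * 1) s :=
    (hasDerivAt_const s (1 + lam * t)).sub ((hasDerivAt_id s).const_mul (lam * t))
  have hGs := ((hNs.div hDs hDne).pow i).mul (hDs.rpow_const (p := -(nu/lam)) (Or.inl hDne))
  constructor
  · simp only [G]
    erw [hGt.deriv, hGs.deriv]
    simp only [Pi.div_apply, Pi.pow_apply]
    have hQ : (1 + lam * t - lam * t * s) ^ (-(nu / lam) - 1)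
        = (1 + lam * t - lam * t * s) ^ (-(nu / lam)) / (1 + lam * t - lam * t * s) := by
      rw [Real.rpow_sub hDpos, Real.rpow_one]
    rw [hQ, ← hlm]
    set A := ((lam * t + s * (1 - lam * t)) / (1 + lam * t - lam * t * s)) ^ (i - 1) with hA
    set B := ((lam * t + s * (1 - lam * t)) / (1 + lam * t - lam * t * s)) ^ i with hB
    set P := (1 + lam * t - lam * t * s) ^ (-(nu / lam)) with hP
    set D := 1 + lam * t - lam * t * s with hDdef
    field_simp
    rw [hDdef]
    ring
  · intro σ hσ
    simp [G]
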